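/- Monotonicity of negative-order Sibson mutual information: if α₂ < α₁ < 0, then I_{α₁}(X,Y) ≤ I_{α₂}(X,Y), where I_α(X,Y) = -max_{q_Y} D_α(p_{XY} ‖ p_X ⊗ q_Y). -/

import Mathlib

open Real Finset

/-- Closed form of `∑ q^(1-α) A` at the optimizing `q ∝ A^(1/α)`. -/
lemma sibson_aux_closed {Y : Type*} [Fintype Y] (A : Y → ℝ) (hA : ∀ y, 0 < A y)
    (α : ℝ) (hα : α < 0) (hS : 0 < ∑ y', (A y') ^ (1/α)) :
    ∑ y, ((A y) ^ (1/α) / (∑ y', (A y') ^ (1/α))) ^ (1-α) * A y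
      = (∑ y', (A y') ^ (1/α)) ^ α := by
  set S : ℝ := ∑ y', (A y') ^ (1/α) with hSdef
  have hα0 : α ≠ 0 := hα.ne
  have he : (1/α) * (1-α) + 1 = 1/α := by field_simp; ring
  have hterm : ∀ y, ((A y) ^ (1/α) / S) ^ (1-α) * A y
      = (A y) ^ (1/α) * S ^ (α-1) := by
    intro y
    have hAy := hA y
    calc ((A y) ^ (1/α) / S) ^ (1-α) * A y
        = (A y) ^ ((1/α) * (1-α)) / S ^ (1-α) * A y := by
          rw [Real.div_rpow (Real.rpow_nonneg hAy.le _) hS.le, ← Real.rpow_mul hAy.le]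
      _ = ((A y) ^ ((1/α) * (1-α)) * (A y) ^ (1:ℝ)) * S ^ (-(1-α)) := by
          rw [Real.rpow_one, Real.rpow_neg hS.le]; ring
      _ = (A y) ^ ((1/α) * (1-α) + 1) * S ^ (α-1) := by
          rw [← Real.rpow_add hAy]; norm_num
      _ = (A y) ^ (1/α) * S ^ (α-1) := by rw [he]
  calc ∑ y, ((A y) ^ (1/α) / S) ^ (1-α) * A y
      = ∑ y, (A y) ^ (1/α) * S ^ (α-1) := by simp only [hterm]
    _ = S * S ^ (α-1) := by rw [← Finset.sum_mul]
    _ = S ^ ((1:ℝ) + (α-1)) := by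
        rw [Real.rpow_add hS, Real.rpow_one]
    _ = S ^ α := by norm_num

/-- Hölder/Jensen step: `S^α ≤ ∑ q^(1-α) A` for any pmf `q`, when `α < 0`. -/
lemma sibson_aux_holder {Y : Type*} [Fintype Y] (A q : Y → ℝ) (hA : ∀ y, 0 < A y)
    (hq : ∀ y, 0 < q y) (hq1 : ∑ y, q y = 1)
    (α : ℝ) (hα : α < 0) :
    (∑ y', (A y') ^ (1/α)) ^ α ≤ ∑ y, (q y) ^ (1-α) * A y := by
  have hα0 : α ≠ 0 := hα.ne
  have hα1 : α - 1 ≠ 0 := by intro h; nlinarith [h]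
  set b : Y → ℝ := fun y => (A y) ^ (1/α) with hbdef
  have hb : ∀ y, 0 < b y := fun y => Real.rpow_pos_of_pos (hA y) _
  have hbα : ∀ y, (b y) ^ α = A y := by
    intro y
    rw [hbdef, ← Real.rpow_mul (hA y).le]
    field_simp
    exact Real.rpow_one _
  have hS : 0 < ∑ y', b y' := by
    have : (0:ℝ) < ∑ y, q y := by rw [hq1]; norm_num
    have hne : (Finset.univ : Finset Y).Nonempty := by
      by_contra h
      rw [Finset.not_nonempty_iff_eq_empty] at h
      rw [h] at this; simp at this
    exact Finset.sum_pos (fun y _ => hb y) hne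
  set P : ℝ := (α-1)/α with hPdef
  have hP : 1 ≤ P := by
    rw [hPdef, le_div_iff_of_neg hα]
    linarith
  set w : Y → ℝ := fun y => q y * (b y / q y) ^ α with hwdef
  set f : Y → ℝ := fun y => (b y / q y) ^ (-α) with hfdef
  have hbq : ∀ y, 0 < b y / q y := fun y => div_pos (hb y) (hq y)
  have hw0 : ∀ y, 0 ≤ w y := fun y =>
    (mul_pos (hq y) (Real.rpow_pos_of_pos (hbq y) _)).le
  have hf0 : ∀ y, 0 ≤ f y := fun y => (Real.rpow_pos_of_pos (hbq y) _).le
  have key := Real.inner_le_weight_mul_Lp_of_nonneg Finset.univ hP w f hw0 hf0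
  have hwf : ∀ y, w y * f y = q y := by
    intro y
    rw [hwdef, hfdef]
    simp only
    rw [mul_assoc, ← Real.rpow_add (hbq y)]
    simp
  have h1α : (0:ℝ) < 1 - α := by linarith
  have hwA : ∀ y, w y = q y ^ (1-α) * A y := by
    intro y
    rw [hwdef]
    simp only
    rw [Real.div_rpow (hb y).le (hq y).le, hbα, Real.rpow_sub (hq y), Real.rpow_one]
    ring
  have hwfP : ∀ y, w y * f y ^ P = b y := by
    intro y
    rw [hwdef, hfdef]
    simp only
    rw [← Real.rpow_mul (hbq y).le]
    have hmP : -α * P = 1 - α := by rw [hPdef]; field_simp; ring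
    rw [hmP, mul_assoc, ← Real.rpow_add (hbq y)]
    norm_num
    rw [mul_comm]
    exact div_mul_cancel₀ _ (hq y).ne'
  rw [show (∑ y, w y * f y) = 1 by simp only [hwf]; exact hq1] at key
  rw [show (∑ y, w y * f y ^ P) = ∑ y, b y from Finset.sum_congr rfl fun y _ => hwfP y] at key
  rw [show (∑ y, w y) = ∑ y, (q y) ^ (1-α) * A y from
    Finset.sum_congr rfl fun y _ => hwA y] at key
  set T : ℝ := ∑ y, (q y) ^ (1-α) * A y with hTdef
  have hT : 0 < T := by
    have hne : (Finset.univ : Finset Y).Nonempty := by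
      by_contra h
      rw [Finset.not_nonempty_iff_eq_empty] at h
      have : (0:ℝ) < ∑ y, q y := by rw [hq1]; norm_num
      rw [h] at this; simp at this
    exact Finset.sum_pos (fun y _ => mul_pos (Real.rpow_pos_of_pos (hq y) _) (hA y)) hne
  have hu : 1 - P⁻¹ = 1/(1-α) := by
    rw [hPdef, inv_div]
    field_simp [hα1, h1α.ne']
    try ring
  have hv : P⁻¹ = -α * (1/(1-α)) := by
    rw [hPdef, inv_div]
    field_simp [hα1, h1α.ne']
    try ring
  rw [hu, hv, Real.rpow_mul hS.le, ← Real.mul_rpow hT.le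
    (Real.rpow_nonneg hS.le _)] at key
  have hupos : (0:ℝ) < 1/(1-α) := one_div_pos.mpr h1α
  have hZ : (1:ℝ) ≤ T * (∑ y, b y) ^ (-α) := by
    by_contra h
    push_neg at h
    have := Real.rpow_lt_one (by positivity) h hupos
    linarith [key]
  show (∑ y', b y') ^ α ≤ T
  calc (∑ y', b y') ^ α = (∑ y', b y') ^ α * 1 := by ring
    _ ≤ (∑ y', b y') ^ α * (T * (∑ y, b y) ^ (-α)) :=
        mul_le_mul_of_nonneg_left hZ (Real.rpow_nonneg hS.le _)
    _ = T * ((∑ y', b y') ^ α * (∑ y', b y') ^ (-α)) := by ring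
    _ = T := by rw [← Real.rpow_add hS]; norm_num

/-- Power-mean monotonicity in the exponent, negative range, log form. -/
lemma sibson_aux_mono {Z : Type*} [Fintype Z] (w r : Z → ℝ) (hw : ∀ z, 0 < w z)
    (hw1 : ∑ z, w z = 1) (hr : ∀ z, 0 < r z) (s₁ s₂ : ℝ) (h21 : s₂ < s₁) (h10 : s₁ < 0) :
    (1/s₂) * Real.log (∑ z, w z * r z ^ s₂) ≤ (1/s₁) * Real.log (∑ z, w z * r z ^ s₁) := by
  have hs₁ : s₁ ≠ 0 := h10.ne
  have hs₂ : s₂ ≠ 0 := (h21.trans h10).ne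
  have hne : (Finset.univ : Finset Z).Nonempty := by
    by_contra h
    rw [Finset.not_nonempty_iff_eq_empty] at h
    have : (0:ℝ) < ∑ z, w z := by rw [hw1]; norm_num
    rw [h] at this; simp at this
  have ht : 1 ≤ s₂ / s₁ := by
    rw [le_div_iff_of_neg h10]; linarith
  have key := Real.rpow_arith_mean_le_arith_mean_rpow Finset.univ w (fun z => r z ^ s₁)
    (fun z _ => (hw z).le) hw1 (fun z _ => (Real.rpow_pos_of_pos (hr z) _).le) ht
  have hrp : ∀ z : Z, (r z ^ s₁) ^ (s₂/s₁) = r z ^ s₂ := by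
    intro z
    rw [← Real.rpow_mul (hr z).le]
    congr 1
    field_simp
  simp only [hrp] at key
  have hT1 : 0 < ∑ z, w z * r z ^ s₁ :=
    Finset.sum_pos (fun z _ => mul_pos (hw z) (Real.rpow_pos_of_pos (hr z) _)) hne
  have hT2 : 0 < ∑ z, w z * r z ^ s₂ :=
    Finset.sum_pos (fun z _ => mul_pos (hw z) (Real.rpow_pos_of_pos (hr z) _)) hne
  have hlog : (s₂/s₁) * Real.log (∑ z, w z * r z ^ s₁) ≤ Real.log (∑ z, w z * r z ^ s₂) := by
    rw [← Real.log_rpow hT1]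
    exact Real.log_le_log (Real.rpow_pos_of_pos hT1 _) key
  have hneg : 1/s₂ ≤ 0 := by
    apply le_of_lt
    apply div_neg_of_pos_of_neg one_pos (h21.trans h10)
  have hstep := mul_le_mul_of_nonpos_left hlog hneg
  have heq : 1/s₂ * ((s₂/s₁) * Real.log (∑ z, w z * r z ^ s₁))
      = 1/s₁ * Real.log (∑ z, w z * r z ^ s₁) := by
    field_simp
  linarith

/-- Per-term identity relating the two representations. -/
lemma sibson_aux_term (a c d α : ℝ) (ha : 0 < a) (hc : 0 < c) (hd : 0 < d) :
    d ^ (1-α) * ((a/c) ^ α * c) = a * (a/(c*d)) ^ (α-1) := by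
  have h1 := (Real.rpow_pos_of_pos ha α).ne'
  have h2 := (Real.rpow_pos_of_pos hc α).ne'
  have h3 := (Real.rpow_pos_of_pos hd α).ne'
  rw [Real.div_rpow ha.le hc.le, Real.div_rpow ha.le (mul_pos hc hd).le,
    Real.mul_rpow hc.le hd.le, Real.rpow_sub ha, Real.rpow_sub hc, Real.rpow_sub hd, Real.rpow_sub hd,
    Real.rpow_one, Real.rpow_one, Real.rpow_one]
  field_simp

/-- Monotonicity of negative-order Sibson mutual information:
if `α₂ < α₁ < 0` then `I_{α₁}(X,Y) ≤ I_{α₂}(X,Y)`. -/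
theorem sibson_neg_order_mono
    {X Y : Type*} [Fintype X] [Fintype Y]
    (p : X × Y → ℝ) (hp : ∀ z, 0 < p z) (hp1 : ∑ z, p z = 1)
    (pX : X → ℝ) (hpX : ∀ x, pX x = ∑ y, p (x, y))
    (α₁ α₂ : ℝ) (h21 : α₂ < α₁) (h10 : α₁ < 0) :
    (α₁ / (1 - α₁)) *
        Real.log (∑ y, (∑ x, (p (x, y) / pX x) ^ α₁ * pX x) ^ (1 / α₁))
      ≤ (α₂ / (1 - α₂)) *
        Real.log (∑ y, (∑ x, (p (x, y) / pX x) ^ α₂ * pX x) ^ (1 / α₂)) := by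
  have hα₂0 : α₂ < 0 := h21.trans h10
  have hXYne : Nonempty (X × Y) := by
    by_contra h
    rw [not_nonempty_iff] at h
    rw [Finset.univ_eq_empty, Finset.sum_empty] at hp1
    norm_num at hp1
  haveI : Nonempty X := ⟨hXYne.some.1⟩
  haveI : Nonempty Y := ⟨hXYne.some.2⟩
  have hpX0 : ∀ x, 0 < pX x := by
    intro x
    rw [hpX x]
    exact Finset.sum_pos (fun y _ => hp (x, y)) Finset.univ_nonempty
  have hA : ∀ (α : ℝ) (y : Y), 0 < ∑ x, (p (x, y) / pX x) ^ α * pX x := by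
    intro α y
    exact Finset.sum_pos (fun x _ =>
      mul_pos (Real.rpow_pos_of_pos (div_pos (hp (x, y)) (hpX0 x)) _) (hpX0 x))
      Finset.univ_nonempty
  have hS : ∀ α : ℝ, 0 < ∑ y, (∑ x, (p (x, y) / pX x) ^ α * pX x) ^ (1/α) := by
    intro α
    exact Finset.sum_pos (fun y _ => Real.rpow_pos_of_pos (hA α y) _) Finset.univ_nonempty
  set q : Y → ℝ := fun y => (∑ x, (p (x, y) / pX x) ^ α₂ * pX x) ^ (1/α₂)
      / (∑ y', (∑ x, (p (x, y') / pX x) ^ α₂ * pX x) ^ (1/α₂)) with hqdef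
  have hq0 : ∀ y, 0 < q y := fun y =>
    div_pos (Real.rpow_pos_of_pos (hA α₂ y) _) (hS α₂)
  have hq1 : ∑ y, q y = 1 := by
    rw [hqdef, ← Finset.sum_div, div_self (hS α₂).ne']
  -- the two representations of T(α)
  have hTR : ∀ α : ℝ, (∑ y, q y ^ (1-α) * (∑ x, (p (x, y) / pX x) ^ α * pX x))
      = ∑ z : X × Y, p z * (p z / (pX z.1 * q z.2)) ^ (α-1) := by
    intro α
    rw [Fintype.sum_prod_type, Finset.sum_comm]
    refine Finset.sum_congr rfl fun y _ => ?_
    rw [Finset.mul_sum]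
    refine Finset.sum_congr rfl fun x _ => ?_
    exact sibson_aux_term (p (x, y)) (pX x) (q y) α (hp (x, y)) (hpX0 x) (hq0 y)
  -- monotonicity step
  have hmono := sibson_aux_mono p (fun z : X × Y => p z / (pX z.1 * q z.2)) hp hp1
    (fun z => div_pos (hp z) (mul_pos (hpX0 z.1) (hq0 z.2)))
    (α₁ - 1) (α₂ - 1) (by linarith) (by linarith)
  rw [← hTR, ← hTR] at hmono
  -- closed form at α₂
  have hclosed : (∑ y, q y ^ (1-α₂) * (∑ x, (p (x, y) / pX x) ^ α₂ * pX x))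
      = (∑ y, (∑ x, (p (x, y) / pX x) ^ α₂ * pX x) ^ (1/α₂)) ^ α₂ := by
    rw [hqdef]
    exact sibson_aux_closed _ (hA α₂) α₂ hα₂0 (hS α₂)
  -- Hölder step at α₁
  have hhold : (∑ y, (∑ x, (p (x, y) / pX x) ^ α₁ * pX x) ^ (1/α₁)) ^ α₁
      ≤ ∑ y, q y ^ (1-α₁) * (∑ x, (p (x, y) / pX x) ^ α₁ * pX x) :=
    sibson_aux_holder _ q (hA α₁) hq0 hq1 α₁ h10
  -- put the pieces together in log form
  have hT1 : 0 < ∑ y, q y ^ (1-α₁) * (∑ x, (p (x, y) / pX x) ^ α₁ * pX x) :=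
    Finset.sum_pos (fun y _ =>
      mul_pos (Real.rpow_pos_of_pos (hq0 y) _) (hA α₁ y)) Finset.univ_nonempty
  have hlog1 : α₁ * Real.log (∑ y, (∑ x, (p (x, y) / pX x) ^ α₁ * pX x) ^ (1/α₁))
      ≤ Real.log (∑ y, q y ^ (1-α₁) * (∑ x, (p (x, y) / pX x) ^ α₁ * pX x)) := by
    rw [← Real.log_rpow (hS α₁)]
    exact Real.log_le_log (Real.rpow_pos_of_pos (hS α₁) _) hhold
  have hlog2 : Real.log (∑ y, q y ^ (1-α₂) * (∑ x, (p (x, y) / pX x) ^ α₂ * pX x))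
      = α₂ * Real.log (∑ y, (∑ x, (p (x, y) / pX x) ^ α₂ * pX x) ^ (1/α₂)) := by
    rw [hclosed, Real.log_rpow (hS α₂)]
  rw [hlog2] at hmono
  have hstep := mul_le_mul_of_nonpos_left hlog1 (by
    apply le_of_lt
    exact div_neg_of_pos_of_neg one_pos (by linarith) : 1/(α₁-1) ≤ 0)
  -- hmono : (1/(α₂-1)) * (α₂ * log S₂) ≤ (1/(α₁-1)) * log T₁
  -- hstep : (1/(α₁-1)) * log T₁ ≤ (1/(α₁-1)) * (α₁ * log S₁)
  have hα₁1 : α₁ - 1 ≠ 0 := by intro h; linarith [h]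
  have hα₂1 : α₂ - 1 ≠ 0 := by intro h; linarith [h]
  have h1α₁ : (1:ℝ) - α₁ ≠ 0 := by intro h; linarith [h]
  have h1α₂ : (1:ℝ) - α₂ ≠ 0 := by intro h; linarith [h]
  set L₁ := Real.log (∑ y, (∑ x, (p (x, y) / pX x) ^ α₁ * pX x) ^ (1/α₁)) with hL₁
  set L₂ := Real.log (∑ y, (∑ x, (p (x, y) / pX x) ^ α₂ * pX x) ^ (1/α₂)) with hL₂
  have e₁ : α₁ / (1 - α₁) * L₁ = -(1/(α₁-1) * (α₁ * L₁)) := by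
    field_simp
    ring
  have e₂ : α₂ / (1 - α₂) * L₂ = -(1/(α₂-1) * (α₂ * L₂)) := by
    field_simp
    ring
  rw [e₁, e₂]
  linarith
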